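/- Let f be a normalized monotone submodular function on a finite set M and I an independence system on M with optimum OPT = max_{S ∈ I} f(S). For any R ⊆ M with |R| = r, the optimum over independent sets avoiding R satisfies max{ f(S) : S ∈ I, S ∩ R = ∅ } ≥ OPT − Σ_{k=1}^{r} w_k, where w_1 ≥ w_2 ≥ … are the values f({x}) over items x with {x} ∈ I, listed in non-increasing order (with w_k = 0 if fewer than k feasible singletons exist). -/

import Mathlib

open Finset

/-- A set function on subsets of a finite ground set is submodular if the marginal value of any
item with respect to a smaller set is at least its marginal value with respect to a larger set. -/
def Submodular {α : Type*} [DecidableEq α] (f : Finset α → ℝ) : Prop :=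
  ∀ ⦃S T : Finset α⦄, S ⊆ T → ∀ ⦃x : α⦄, x ∉ T →
    f (insert x T) - f T ≤ f (insert x S) - f S

/-- `topVal f P ℓ` is the `(ℓ+1)`-st largest value of `f` on singletons `{x}` with `P x`
(so `topVal f P 0` is the largest), taking value `0` if fewer such singletons exist. -/
noncomputable def topVal {α : Type*} [Fintype α] (f : Finset α → ℝ) (P : α → Prop)
    [DecidablePred P] (ℓ : ℕ) : ℝ :=
  ((((Finset.univ.filter P).val.map fun x => f {x}).sort (· ≤ ·)).reverse).getD ℓ 0

lemma getD_nonneg {l : List ℝ} (hn : ∀ x ∈ l, (0:ℝ) ≤ x) (k : ℕ) : 0 ≤ l.getD k 0 := by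
  rcases lt_or_ge k l.length with h | h
  · rw [List.getD_eq_getElem l 0 h]
    exact hn _ (List.getElem_mem h)
  · rw [List.getD_eq_default l 0 h]

lemma sorted_step {a : ℝ} {l : List ℝ} (hs : (a :: l).Pairwise (· ≥ ·))
    (hn : ∀ x ∈ a :: l, (0:ℝ) ≤ x) (k : ℕ) :
    l.getD k 0 ≤ (a :: l).getD k 0 := by
  rw [← List.getD_cons_succ (x := a)]
  rcases lt_or_ge (k+1) (a :: l).length with h | h
  · rw [List.getD_eq_getElem _ 0 h]
    rcases lt_or_ge k (a :: l).length with h2 | h2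
    · rw [List.getD_eq_getElem _ 0 h2]
      have := List.pairwise_iff_getElem.mp hs k (k+1) h2 h (by simp)
      simpa using this
    · omega
  · rw [List.getD_eq_default _ 0 h]
    exact getD_nonneg hn k

lemma key (l : List ℝ) : l.Pairwise (· ≥ ·) → (∀ x ∈ l, (0:ℝ) ≤ x) →
    ∀ (r : ℕ) (t : Multiset ℝ), t ≤ ↑l → Multiset.card t ≤ r →
    t.sum ≤ ∑ k ∈ Finset.range r, l.getD k 0 := by
  induction l with
  | nil =>
    intro _ _ r t ht _
    have : t = 0 := le_antisymm (by simpa using ht) (Multiset.zero_le t)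
    subst this
    simp [Finset.sum_nonneg]
  | cons a l ih =>
    intro hs hn r t ht hc
    rcases eq_or_ne t 0 with rfl | htne
    · simpa using Finset.sum_nonneg fun k _ => getD_nonneg hn k
    have hr : 1 ≤ r := by
      rcases Multiset.exists_mem_of_ne_zero htne with ⟨b, hb⟩
      have := Multiset.card_pos.mpr htne
      omega
    obtain ⟨r', rfl⟩ : ∃ r', r = r' + 1 := ⟨r - 1, by omega⟩
    have hsum : ∑ k ∈ Finset.range (r' + 1), (a :: l).getD k 0
        = ∑ k ∈ Finset.range r', l.getD k 0 + a := by
      rw [Finset.sum_range_succ']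
      simp
    have hs' : l.Pairwise (· ≥ ·) := hs.of_cons
    have hn' : ∀ x ∈ l, (0:ℝ) ≤ x := fun x hx => hn x (List.mem_cons_of_mem a hx)
    by_cases ha : a ∈ t
    · have h1 : t.erase a ≤ ↑l := by
        have := Multiset.erase_le_erase a ht
        simpa using this
      have h2 : Multiset.card (t.erase a) ≤ r' := by
        rw [Multiset.card_erase_of_mem ha, Nat.pred_eq_sub_one]
        have := Multiset.card_pos.mpr htne
        omega
      have := ih hs' hn' r' (t.erase a) h1 h2
      have hts : t.sum = a + (t.erase a).sum := by
        conv_lhs => rw [← Multiset.cons_erase ha]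
        simp
      rw [hts, hsum]
      linarith
    · have h1 : t ≤ ↑l := by
        rw [Multiset.le_iff_count]
        intro x
        by_cases hx : x = a
        · subst hx
          simp [Multiset.count_eq_zero_of_notMem ha]
        · have := Multiset.le_iff_count.mp ht x
          simpa [Multiset.count_cons, List.count_cons, hx, Ne.symm hx] using this
      have h2 := ih hs' hn' (r' + 1) t h1 hc
      have h3 : ∑ k ∈ Finset.range (r' + 1), l.getD k 0
          ≤ ∑ k ∈ Finset.range (r' + 1), (a :: l).getD k 0 :=
        Finset.sum_le_sum fun k _ => sorted_step hs hn k
      linarith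

lemma marginal_le {α : Type*} [DecidableEq α] (f : Finset α → ℝ)
    (hnorm : f ∅ = 0)
    (hmono : ∀ ⦃S T : Finset α⦄, S ⊆ T → f S ≤ f T)
    (hsub : Submodular f) :
    ∀ (B A : Finset α), f (A ∪ B) - f A ≤ ∑ x ∈ B, f {x} := by
  intro B
  induction B using Finset.induction with
  | empty => intro A; simp
  | @insert x B hx ih =>
    intro A
    rw [Finset.sum_insert hx]
    have h1 : f (A ∪ insert x B) = f (insert x (A ∪ B)) := by
      rw [Finset.union_insert]
    have h2 : f (insert x (A ∪ B)) - f (A ∪ B) ≤ f {x} := by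
      by_cases hxAB : x ∈ A ∪ B
      · rw [Finset.insert_eq_self.mpr hxAB]
        have : (0:ℝ) ≤ f {x} := by
          have := hmono (Finset.empty_subset {x}); linarith
        linarith
      · have := hsub (Finset.empty_subset (A ∪ B)) hxAB
        simpa [hnorm] using this
    have h3 := ih A
    rw [h1]
    linarith

/-- Let `f` be normalized monotone submodular and `Indep` an independence system with optimum
value `OPT`. For any set `R` of `r` items, the optimum over independent sets avoiding `R` is at
least `OPT − ∑_{k=1}^{r} w_k`, where `w_1 ≥ w_2 ≥ …` are the values of `f` on feasible singletons
in non-increasing order (padded with `0` if fewer than `k` feasible singletons exist). -/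
theorem stmt_15 {α : Type*} [DecidableEq α] [Fintype α]
    (f : Finset α → ℝ) (Indep : Finset α → Prop)
    [DecidablePred fun x : α => Indep {x}]
    (hnorm : f ∅ = 0)
    (hmono : ∀ ⦃S T : Finset α⦄, S ⊆ T → f S ≤ f T)
    (hsub : Submodular f)
    (hempty : Indep ∅)
    (hdown : ∀ ⦃X Y : Finset α⦄, X ⊆ Y → Indep Y → Indep X)
    (OPT : ℝ)
    (hOPTub : ∀ S : Finset α, Indep S → f S ≤ OPT)
    (hOPTmem : ∃ S : Finset α, Indep S ∧ f S = OPT)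
    (R : Finset α) :
    ∃ S : Finset α, Indep S ∧ S ∩ R = ∅ ∧
      OPT - ∑ k ∈ Finset.range R.card, topVal f (fun x : α => Indep {x}) k ≤ f S := by
  obtain ⟨Sstar, hSstar, hfS⟩ := hOPTmem
  refine ⟨Sstar \ R, hdown (Finset.sdiff_subset) hSstar, ?_, ?_⟩
  · simp [Finset.sdiff_inter_self]
  set T := Sstar ∩ R with hT
  -- step 1
  have step1 : f Sstar - f (Sstar \ R) ≤ ∑ x ∈ T, f {x} := by
    have := marginal_le f hnorm hmono hsub T (Sstar \ R)
    rwa [Finset.sdiff_union_inter] at this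
  -- step 2
  set s : Multiset ℝ := (Finset.univ.filter (fun x : α => Indep {x})).val.map fun x => f {x} with hsdef
  set l : List ℝ := (s.sort (· ≤ ·)).reverse with hldef
  have hl_sorted : l.Pairwise (· ≥ ·) := by
    rw [hldef]
    exact List.pairwise_reverse.mpr (Multiset.pairwise_sort s (· ≤ ·))
  have hl_nonneg : ∀ x ∈ l, (0:ℝ) ≤ x := by
    intro x hx
    rw [hldef, List.mem_reverse, Multiset.mem_sort] at hx
    rw [hsdef] at hx
    obtain ⟨y, _, rfl⟩ := Multiset.mem_map.mp hx
    have := hmono (Finset.empty_subset ({y} : Finset α))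
    linarith
  have hTsub : T ⊆ Finset.univ.filter (fun x : α => Indep {x}) := by
    intro x hx
    simp only [Finset.mem_filter, Finset.mem_univ, true_and]
    exact hdown (by simp [Finset.singleton_subset_iff,
      Finset.mem_of_mem_inter_left hx]) hSstar
  have htle : (T.val.map fun x => f {x}) ≤ ↑l := by
    have : (↑l : Multiset ℝ) = s := by
      rw [hldef, Multiset.coe_reverse, Multiset.sort_eq]
    rw [this, hsdef]
    exact Multiset.map_le_map (Finset.val_le_iff.mpr hTsub)
  have hcard : Multiset.card (T.val.map fun x => f {x}) ≤ R.card := by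
    simp only [Multiset.card_map]
    exact le_trans (Finset.card_le_card (Finset.inter_subset_right)) le_rfl
  have step2 : ∑ x ∈ T, f {x} ≤ ∑ k ∈ Finset.range R.card, l.getD k 0 := by
    have := key l hl_sorted hl_nonneg R.card (T.val.map fun x => f {x}) htle hcard
    rwa [Finset.sum_eq_multiset_sum]
  have htop : ∀ k, topVal f (fun x : α => Indep {x}) k = l.getD k 0 := fun k => rfl
  calc OPT - ∑ k ∈ Finset.range R.card, topVal f (fun x : α => Indep {x}) k
      = OPT - ∑ k ∈ Finset.range R.card, l.getD k 0 := by
        simp only [htop]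
    _ ≤ f (Sstar \ R) := by linarith
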